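/- For a double Lie group (G; A, B), with ψ_A(a) = det(P_A Ad(a) P_A), ψ_B(a) = det(P_B Ad(a) P_B) for a ∈ A, and φ_A(b) = det(P_A Ad(b) P_A), φ_B(b) = det(P_B Ad(b) P_B) for b ∈ B, the function Q satisfies Q(g) = ψ_A(a_L(g)) φ_A(b_R(g)) / (ψ_A(a_R(g)) φ_A(b_L(g))) for all g ∈ G. -/

import Mathlib

section Aux

variable {V : Type*} [AddCommGroup V] [Module ℝ V]

lemma det_one_add_corner (PA PB N : Module.End ℝ V)
    (hsum : PA + PB = 1) (hPA : PA * PA = PA) (hPB : PB * PB = PB)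
    (hPAB : PA * PB = 0) (hPBA : PB * PA = 0)
    (hPAN : PA * N = N) (hNPA : N * PA = 0) :
    LinearMap.det (1 + N) = 1 := by
  have hPBN : PB * N = 0 := by rw [← hPAN, ← mul_assoc, hPBA, zero_mul]
  have hNPB : N * PB = N := by
    have : PB = 1 - PA := by rw [← hsum]; abel
    rw [this, mul_sub, mul_one, hNPA, sub_zero]
  have hN2 : N * N = 0 := by
    calc N * N = N * PA * N := by rw [mul_assoc, hPAN]
    _ = 0 := by rw [hNPA, zero_mul]
  set D : Module.End ℝ V := PA - PB with hD
  have hD2 : D * D = 1 := by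
    rw [hD, mul_sub, sub_mul, sub_mul, hPA, hPB, hPAB, hPBA, sub_zero, zero_sub,
      sub_neg_eq_add, hsum]
  have hDN : D * N = N := by rw [hD, sub_mul, hPAN, hPBN, sub_zero]
  have hND : N * D = -N := by rw [hD, mul_sub, hNPA, hNPB, zero_sub]
  have hconj : D * (1 + N) * D = 1 - N := by
    rw [mul_add, mul_one, hDN, add_mul, hD2, hND]; abel
  have hdet1 : LinearMap.det (1 + N) * LinearMap.det (1 - N) = 1 := by
    have h1 : (1 + N) * (1 - N) = 1 := by
      rw [add_mul, one_mul, mul_sub, mul_one, hN2, sub_zero]; abel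
    rw [← map_mul, h1, map_one]
  have hdetD : LinearMap.det D * LinearMap.det D = 1 := by
    rw [← map_mul, hD2, map_one]
  have hdeteq : LinearMap.det (1 - N) = LinearMap.det (1 + N) := by
    have h2 := congrArg LinearMap.det hconj
    rw [map_mul, map_mul] at h2
    linear_combination -h2 + LinearMap.det (1 + N) * hdetD
  have hsq : LinearMap.det (1 + N) ^ 2 = 1 := by
    calc LinearMap.det (1 + N) ^ 2
        = LinearMap.det (1 + N) * LinearMap.det (1 - N) := by rw [sq, hdeteq]
    _ = 1 := hdet1
  have hpos : 0 ≤ LinearMap.det (1 + N) := by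
    have hfac : (1 + (2⁻¹ : ℝ) • N) * (1 + (2⁻¹ : ℝ) • N) = 1 + N := by
      simp only [mul_add, add_mul, one_mul, mul_one, smul_mul_assoc, mul_smul_comm,
        hN2, smul_zero, add_zero]
      module
    have h3 := congrArg LinearMap.det hfac
    rw [map_mul] at h3
    nlinarith [h3]
  nlinarith [hsq, hpos]

end Aux

section Aux2

variable {V : Type*} [AddCommGroup V] [Module ℝ V]

lemma assoc_zero₂ {P Q : Module.End ℝ V} (h : P * Q = 0) (x : Module.End ℝ V) :
    P * (Q * x) = 0 := by rw [← mul_assoc, h, zero_mul]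

lemma assoc_proj {P : Module.End ℝ V} (h : P * P = P) (x : Module.End ℝ V) :
    P * (P * x) = P * x := by rw [← mul_assoc, h]

lemma assoc_zero₃ {P T Q : Module.End ℝ V} (h : P * T * Q = 0) (x : Module.End ℝ V) :
    P * (T * (Q * x)) = 0 := by
  rw [← mul_assoc, ← mul_assoc, h, zero_mul]

lemma assoc_zero₃' {P T Q : Module.End ℝ V} (h : P * T * Q = 0) :
    P * (T * Q) = 0 := by rw [← mul_assoc]; exact h

lemma det_block_triangular (PA PB T : Module.End ℝ V)
    (hsum : PA + PB = 1) (hPA : PA * PA = PA) (hPB : PB * PB = PB)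
    (hPAB : PA * PB = 0) (hPBA : PB * PA = 0)
    (htri : PB * T * PA = 0)
    (hunip : LinearMap.det (1 + PA * T * PB) = 1) :
    LinearMap.det T = LinearMap.det (PA * T * PA + PB) * LinearMap.det (PB * T * PB + PA) := by
  have hfac : T = (PB * T * PB + PA) * (1 + PA * T * PB) * (PA * T * PA + PB) := by
    conv_lhs => rw [show T = (PA + PB) * T * (PA + PB) by rw [hsum, one_mul, mul_one]]
    simp only [mul_add, add_mul, one_mul, mul_one, mul_assoc]
    simp only [assoc_proj hPA, assoc_proj hPB, hPA, hPB, assoc_zero₂ hPAB,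
      assoc_zero₂ hPBA, hPAB, hPBA, assoc_zero₃ htri, assoc_zero₃' htri,
      mul_zero, zero_mul, add_zero, zero_add]
    abel
  conv_lhs => rw [hfac]
  rw [map_mul, map_mul, hunip]
  ring

lemma detA_block_mul (PA PB S T : Module.End ℝ V)
    (hsum : PA + PB = 1) (hPA : PA * PA = PA) (hPB : PB * PB = PB)
    (hPAB : PA * PB = 0) (hPBA : PB * PA = 0)
    (hS : PA * S * PB = 0) (hT : PB * T * PA = 0) :
    LinearMap.det (PA * (S * T) * PA + PB) =
      LinearMap.det (PA * S * PA + PB) * LinearMap.det (PA * T * PA + PB) := by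
  have key : (PA * S * PA + PB) * (PA * T * PA + PB) = PA * (S * T) * PA + PB := by
    conv_rhs => rw [show S * T = S * ((PA + PB) * T) by rw [hsum, one_mul]]
    simp only [mul_add, add_mul, one_mul, mul_one, mul_assoc]
    simp only [assoc_proj hPA, assoc_proj hPB, hPA, hPB, assoc_zero₂ hPAB,
      assoc_zero₂ hPBA, hPAB, hPBA, assoc_zero₃ hS, assoc_zero₃' hS,
      assoc_zero₃ hT, assoc_zero₃' hT, mul_zero, zero_mul, add_zero, zero_add]
  rw [← key, map_mul]

lemma detB_block_mul (PA PB S T : Module.End ℝ V)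
    (hsum : PA + PB = 1) (hPA : PA * PA = PA) (hPB : PB * PB = PB)
    (hPAB : PA * PB = 0) (hPBA : PB * PA = 0)
    (hS : PB * S * PA = 0) (hT : PA * T * PB = 0) :
    LinearMap.det (PB * (S * T) * PB + PA) =
      LinearMap.det (PB * S * PB + PA) * LinearMap.det (PB * T * PB + PA) := by
  have key : (PB * S * PB + PA) * (PB * T * PB + PA) = PB * (S * T) * PB + PA := by
    conv_rhs => rw [show S * T = S * ((PA + PB) * T) by rw [hsum, one_mul]]
    simp only [mul_add, add_mul, one_mul, mul_one, mul_assoc]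
    simp only [assoc_proj hPA, assoc_proj hPB, hPA, hPB, assoc_zero₂ hPAB,
      assoc_zero₂ hPBA, hPAB, hPBA, assoc_zero₃ hS, assoc_zero₃' hS,
      assoc_zero₃ hT, assoc_zero₃' hT, mul_zero, zero_mul, add_zero, zero_add]
  rw [← key, map_mul]

end Aux2


/-- The function `Q(g) = det(Ad g) / (det g₁ · det g₄)`. -/
noncomputable def Qfun {G V : Type*} [Group G] [AddCommGroup V] [Module ℝ V]
    (Ad : G →* Module.End ℝ V) (PA PB : Module.End ℝ V) (g : G) : ℝ :=
  LinearMap.det ((Ad g : Module.End ℝ V)) /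
    (LinearMap.det (PA * Ad g * PA + PB) * LinearMap.det (PB * Ad g * PB + PA))

/-- Determinant of the `𝔞`-block of `Ad g`; it gives `ψ_A` on `A` and `φ_A` on `B`. -/
noncomputable def detA {G V : Type*} [Group G] [AddCommGroup V] [Module ℝ V]
    (Ad : G →* Module.End ℝ V) (PA PB : Module.End ℝ V) (g : G) : ℝ :=
  LinearMap.det (PA * Ad g * PA + PB)

/-- `Q(g) = ψ_A(a_L g) φ_A(b_R g) / (ψ_A(a_R g) φ_A(b_L g))`. -/
theorem Q_via_modular_functions {G V : Type*} [Group G] [AddCommGroup V]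
    [Module ℝ V] [FiniteDimensional ℝ V]
    (A B : Subgroup G) (hAB : A ⊓ B = ⊥)
    (aL aR bL bR : G → G)
    (haL : ∀ g, aL g ∈ A) (hbR : ∀ g, bR g ∈ B)
    (hbL : ∀ g, bL g ∈ B) (haR : ∀ g, aR g ∈ A)
    (hdec₁ : ∀ g, g = aL g * bR g)
    (hdec₂ : ∀ g, g = bL g * aR g)
    (Ad : G →* Module.End ℝ V) (PA PB : Module.End ℝ V)
    (hsum : PA + PB = 1) (hPA : PA * PA = PA) (hPB : PB * PB = PB)
    (hPAB : PA * PB = 0) (hPBA : PB * PA = 0)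
    (htriA : ∀ a ∈ A, PB * Ad a * PA = 0)
    (htriB : ∀ b ∈ B, PA * Ad b * PB = 0)
    (hinv : ∀ g : G, LinearMap.det (PA * Ad g * PA + PB) ≠ 0 ∧
      LinearMap.det (PB * Ad g * PB + PA) ≠ 0) :
    ∀ g : G, Qfun Ad PA PB g =
      detA Ad PA PB (aL g) * detA Ad PA PB (bR g) /
        (detA Ad PA PB (aR g) * detA Ad PA PB (bL g)) := by
  intro g
  have hsum' : PB + PA = 1 := by rw [add_comm]; exact hsum
  have ta₁ : PB * Ad (aL g) * PA = 0 := htriA _ (haL g)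
  have ta₂ : PB * Ad (aR g) * PA = 0 := htriA _ (haR g)
  have tb₁ : PA * Ad (bL g) * PB = 0 := htriB _ (hbL g)
  have tb₂ : PA * Ad (bR g) * PB = 0 := htriB _ (hbR g)
  have hu : ∀ T : Module.End ℝ V, LinearMap.det (1 + PA * T * PB) = 1 := fun T =>
    det_one_add_corner PA PB _ hsum hPA hPB hPAB hPBA
      (by rw [← mul_assoc, ← mul_assoc, hPA])
      (by rw [mul_assoc, hPBA, mul_zero])
  have hu' : ∀ T : Module.End ℝ V, LinearMap.det (1 + PB * T * PA) = 1 := fun T =>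
    det_one_add_corner PB PA _ hsum' hPB hPA hPBA hPAB
      (by rw [← mul_assoc, ← mul_assoc, hPB])
      (by rw [mul_assoc, hPAB, mul_zero])
  -- det Ad g = detA(aL) detB(aL) detA(bR) detB(bR)
  have hAdg : (Ad g : Module.End ℝ V) = Ad (aL g) * Ad (bR g) := by
    rw [← map_mul, ← hdec₁]
  have hAdg' : (Ad g : Module.End ℝ V) = Ad (bL g) * Ad (aR g) := by
    rw [← map_mul, ← hdec₂]
  have e_aL : LinearMap.det (Ad (aL g) : Module.End ℝ V) =
      LinearMap.det (PA * Ad (aL g) * PA + PB) *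
        LinearMap.det (PB * Ad (aL g) * PB + PA) :=
    det_block_triangular PA PB _ hsum hPA hPB hPAB hPBA ta₁ (hu _)
  have e_bR : LinearMap.det (Ad (bR g) : Module.End ℝ V) =
      LinearMap.det (PB * Ad (bR g) * PB + PA) *
        LinearMap.det (PA * Ad (bR g) * PA + PB) :=
    det_block_triangular PB PA _ hsum' hPB hPA hPBA hPAB tb₂ (hu' _)
  have eA : LinearMap.det (PA * Ad g * PA + PB) =
      LinearMap.det (PA * Ad (bL g) * PA + PB) *
        LinearMap.det (PA * Ad (aR g) * PA + PB) := by
    rw [hAdg']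
    exact detA_block_mul PA PB _ _ hsum hPA hPB hPAB hPBA tb₁ ta₂
  have eB : LinearMap.det (PB * Ad g * PB + PA) =
      LinearMap.det (PB * Ad (aL g) * PB + PA) *
        LinearMap.det (PB * Ad (bR g) * PB + PA) := by
    rw [hAdg]
    exact detB_block_mul PA PB _ _ hsum hPA hPB hPAB hPBA ta₁ tb₂
  have hdg : LinearMap.det (Ad g : Module.End ℝ V) =
      LinearMap.det (Ad (aL g) : Module.End ℝ V) *
        LinearMap.det (Ad (bR g) : Module.End ℝ V) := by
    rw [hAdg, map_mul]
  have n1 := (hinv (aL g)).2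
  have n2 := (hinv (bR g)).2
  have n3 := (hinv (aR g)).1
  have n4 := (hinv (bL g)).1
  unfold Qfun detA
  rw [hdg, e_aL, e_bR, eA, eB]
  field_simp
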